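/- Let a, b, c be words such that a, b, ca, cb are all subdiagonal (of appropriate lengths). If El(a) = El(b), then El(ca) = El(cb). -/

import Mathlib

/-- Descent set (ligne of route) of a word, with 1-based positions. -/
def ligne (w : List ℕ) : Finset ℕ :=
  (Finset.Icc 1 (w.length - 1)).filter (fun i => w.getD (i-1) 0 > w.getD i 0)

/-- Major index of a word. -/
def maj (w : List ℕ) : ℕ := ∑ i ∈ ligne w, i

/-- Inversion number of a word. -/
def inv (w : List ℕ) : ℕ :=
  ((Finset.range w.length ×ˢ Finset.range w.length).filter
    (fun p => p.1 < p.2 ∧ w.getD p.1 0 > w.getD p.2 0)).card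

/-- `w` is (the one-line word of) a permutation of `1,…,n`. -/
def IsPermWord (n : ℕ) (w : List ℕ) : Prop := w.Perm (List.range' 1 n)

/-- One-line word of `σ ∈ S_n` with values in `1,…,n`. -/
def toWord {n : ℕ} (σ : Equiv.Perm (Fin n)) : List ℕ := List.ofFn (fun i => (σ i : ℕ) + 1)

/-- Subexcedent word: `0 ≤ d_i ≤ i-1` (1-based), i.e. `d_i ≤ i` for 0-based `i`. -/
def Subexcedent (w : List ℕ) : Prop := ∀ i < w.length, w.getD i 0 ≤ i

/-- Subdiagonal word: `0 ≤ d_i ≤ n-i` (1-based). -/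
def Subdiagonal (w : List ℕ) : Prop := ∀ i < w.length, w.getD i 0 + i + 1 ≤ w.length

/-- Lehmer code: `d_i = #{j < i : x_j > x_i}`. -/
def invcode (w : List ℕ) : List ℕ :=
  (List.range w.length).map (fun i => ((Finset.range i).filter (fun j => w.getD j 0 > w.getD i 0)).card)

/-- `Lc`-code: `d_i = #{j > i : x_i > x_j}`. -/
def lc (w : List ℕ) : List ℕ :=
  (List.range w.length).map (fun i => ((Finset.Ico (i+1) w.length).filter (fun j => w.getD i 0 > w.getD j 0)).card)

/-- Major index code: `d_i = maj(σ|_i) - maj(σ|_{i-1})`, where `σ|_i` erases letters `> i`. -/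
def majcode (w : List ℕ) : List ℕ :=
  (List.range w.length).map (fun i => maj (w.filter (· ≤ i+1)) - maj (w.filter (· ≤ i)))

/-- `Mc`-code: `d_i = maj(σ^{(i)}) - maj(σ^{(i+1)})`, where `σ^{(i)}` erases letters `< i`. -/
def mc (w : List ℕ) : List ℕ :=
  (List.range w.length).map (fun i => maj (w.filter (fun x => i+1 ≤ x)) - maj (w.filter (fun x => i+2 ≤ x)))

/-- One-line word of the inverse permutation. -/
def invWord (w : List ℕ) : List ℕ :=
  (List.range w.length).map (fun i => w.idxOf (i+1) + 1)

/-- `Ic σ = Lc (σ⁻¹)`. -/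
def ic (w : List ℕ) : List ℕ := lc (invWord w)

/-- Inverse ligne of route. -/
def iligne (w : List ℕ) : Finset ℕ := ligne (invWord w)

/-- Complement map `δ` on codes: `δ(d₁⋯d_n) = (0-d₁)(1-d₂)⋯(n-1-d_n)`. -/
def deltaC (w : List ℕ) : List ℕ :=
  (List.range w.length).map (fun i => i - w.getD i 0)

/-- Nondecreasing rearrangement of a word. -/
def sortW (w : List ℕ) : List ℕ := List.insertionSort (· ≤ ·) w

/-- Set-valued statistic `El = Ligne ∘ Mc⁻¹` on subdiagonal words. -/
noncomputable def El (d : List ℕ) : Finset ℕ := by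
  classical
  exact if h : ∃ w, IsPermWord d.length w ∧ mc w = d then ligne h.choose else ∅

/-- Set-valued statistic `Eul = Ligne ∘ Majcode⁻¹` on subexcedent words. -/
noncomputable def Eul (d : List ℕ) : Finset ℕ := by
  classical
  exact if h : ∃ w, IsPermWord d.length w ∧ majcode w = d then ligne h.choose else ∅

-- basic lemmas
lemma getD_mem {l : List ℕ} {i : ℕ} (h : i < l.length) : l.getD i 0 ∈ l := by
  rw [List.getD_eq_getElem _ _ h]; exact List.getElem_mem h

lemma mem_ligne {w : List ℕ} {i : ℕ} :
    i ∈ ligne w ↔ (1 ≤ i ∧ i ≤ w.length - 1) ∧ w.getD (i-1) 0 > w.getD i 0 := by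
  simp [ligne, Finset.mem_filter, Finset.mem_Icc, and_assoc]

lemma ligne_congr {l₁ l₂ : List ℕ} (hlen : l₁.length = l₂.length)
    (h : ∀ i < l₁.length, ∀ j < l₁.length,
      (l₁.getD i 0 > l₁.getD j 0 ↔ l₂.getD i 0 > l₂.getD j 0)) : ligne l₁ = ligne l₂ := by
  unfold ligne
  rw [hlen]
  apply Finset.filter_congr
  intro i hi
  simp only [Finset.mem_Icc] at hi
  have h1 : i - 1 < l₁.length := by omega
  have h2 : i < l₁.length := by omega
  exact h _ h1 _ h2

lemma getD_map_pred (l : List ℕ) (i : ℕ) :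
    (l.map (· - 1)).getD i 0 = l.getD i 0 - 1 := by
  exact List.getD_map l 0 (· - 1)

lemma ligne_map_pred {l : List ℕ} (h : ∀ x ∈ l, 1 ≤ x) :
    ligne (l.map (· - 1)) = ligne l := by
  apply ligne_congr (by simp)
  intro i hi j hj
  simp only [List.length_map] at hi hj
  rw [getD_map_pred, getD_map_pred]
  have hi1 : 1 ≤ l.getD i 0 := h _ (getD_mem hi)
  have hj1 : 1 ≤ l.getD j 0 := h _ (getD_mem hj)
  omega

lemma maj_map_pred {l : List ℕ} (h : ∀ x ∈ l, 1 ≤ x) :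
    maj (l.map (· - 1)) = maj l := by
  unfold maj; rw [ligne_map_pred h]

lemma subdiagonal_tail {k : ℕ} {l : List ℕ} (h : Subdiagonal (k :: l)) : Subdiagonal l := by
  intro i hi
  have := h (i+1) (by simpa using Nat.succ_lt_succ hi)
  simp at this ⊢; omega

/-- maj increment when inserting a new minimum at position `p` into a word with descent set `L`. -/
def Fp (L : Finset ℕ) (p : ℕ) : ℕ := (if p ∈ L then 0 else p) + (L.filter (p < ·)).card

/-- new descent set after inserting a new minimum at position `p` into a word with descent set `L`. -/
def gS (L : Finset ℕ) (p : ℕ) : Finset ℕ :=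
  (L.filter (· < p) ∪ (if p = 0 then ∅ else {p})) ∪ (L.filter (fun j => p < j)).image (· + 1)

lemma filter_split (L : Finset ℕ) {p q : ℕ} (h : p ≤ q) :
    (L.filter (p < ·)).card
      = (L.filter (q < ·)).card + (L.filter (fun j => p < j ∧ j ≤ q)).card := by
  rw [← Finset.card_union_of_disjoint]
  · congr 1
    ext x
    simp only [Finset.mem_union, Finset.mem_filter]
    constructor
    · rintro ⟨hx, hpx⟩
      by_cases hq : q < x
      · exact Or.inl ⟨hx, hq⟩
      · exact Or.inr ⟨hx, hpx, by omega⟩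
    · rintro (⟨hx, hq⟩ | ⟨hx, h1, h2⟩)
      · exact ⟨hx, by omega⟩
      · exact ⟨hx, h1⟩
  · rw [Finset.disjoint_left]
    intro x h1 h2
    simp only [Finset.mem_filter] at h1 h2
    omega

lemma Fp_ne {L : Finset ℕ} {p q : ℕ} (h : p < q) : Fp L p ≠ Fp L q := by
  have hsplit := filter_split L (le_of_lt h)
  set M := L.filter (fun j => p < j ∧ j ≤ q) with hM
  unfold Fp
  by_cases hq : q ∈ L
  · have hqM : q ∈ M := by simp [hM, Finset.mem_filter, hq, h]
    have : 1 ≤ M.card := Finset.card_pos.mpr ⟨q, hqM⟩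
    by_cases hp : p ∈ L <;> simp [hp, hq] <;> omega
  · have hMb : M.card ≤ q - p - 1 := by
      have : M ⊆ Finset.Ico (p+1) q := by
        intro x hx
        simp only [hM, Finset.mem_filter] at hx
        simp only [Finset.mem_Ico]
        have : x ≠ q := fun e => hq (e ▸ hx.1)
        omega
      calc M.card ≤ (Finset.Ico (p+1) q).card := Finset.card_le_card this
        _ = q - (p+1) := Nat.card_Ico _ _
        _ = q - p - 1 := by omega
    by_cases hp : p ∈ L <;> simp [hp, hq] <;> omega

lemma Fp_le {n : ℕ} {L : Finset ℕ} (hL : L ⊆ Finset.Icc 1 (n-1)) {p : ℕ} (hp : p ≤ n) :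
    Fp L p ≤ n := by
  unfold Fp
  have h1 : (L.filter (p < ·)).card ≤ n - 1 - p := by
    have : L.filter (p < ·) ⊆ Finset.Icc (p+1) (n-1) := by
      intro x hx
      simp only [Finset.mem_filter] at hx
      have := hL hx.1
      simp only [Finset.mem_Icc] at this ⊢
      omega
    calc (L.filter (p < ·)).card ≤ (Finset.Icc (p+1) (n-1)).card := Finset.card_le_card this
      _ = n - 1 + 1 - (p+1) := Nat.card_Icc _ _
      _ ≤ n - 1 - p := by omega
  have h2 : L.card ≤ n - 1 := by
    calc L.card ≤ (Finset.Icc 1 (n-1)).card := Finset.card_le_card hL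
      _ = n - 1 + 1 - 1 := Nat.card_Icc _ _
      _ = n - 1 := by omega
  have h3 : (L.filter (p < ·)).card ≤ L.card := Finset.card_filter_le _ _
  by_cases hp' : p ∈ L <;> simp [hp'] <;> omega

lemma Fp_surj {n : ℕ} {L : Finset ℕ} (hL : L ⊆ Finset.Icc 1 (n-1)) {k : ℕ} (hk : k ≤ n) :
    ∃ p ≤ n, Fp L p = k := by
  have hinj : Set.InjOn (Fp L) (Finset.range (n+1)) := by
    intro x _ y _ hxy
    by_contra hne
    rcases Nat.lt_or_ge x y with h | h
    · exact Fp_ne h hxy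
    · exact Fp_ne (by omega : y < x) hxy.symm
  have hmaps : ∀ x ∈ Finset.range (n+1), Fp L x ∈ Finset.range (n+1) := by
    intro x hx
    simp only [Finset.mem_range] at hx ⊢
    have := Fp_le hL (p := x) (by omega)
    omega
  have himg : (Finset.range (n+1)).image (Fp L) = Finset.range (n+1) := by
    apply Finset.eq_of_subset_of_card_le
    · intro x hx
      simp only [Finset.mem_image] at hx
      obtain ⟨y, hy, rfl⟩ := hx
      exact hmaps y hy
    · rw [Finset.card_image_of_injOn hinj]
  have : k ∈ (Finset.range (n+1)).image (Fp L) := by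
    rw [himg]; simp; omega
  simp only [Finset.mem_image, Finset.mem_range] at this
  obtain ⟨p, hp, hfp⟩ := this
  exact ⟨p, by omega, hfp⟩

lemma mem_gS {L : Finset ℕ} {p i : ℕ} :
    i ∈ gS L p ↔ (i ∈ L ∧ i < p) ∨ (p ≠ 0 ∧ i = p) ∨ (p + 2 ≤ i ∧ i - 1 ∈ L) := by
  unfold gS
  simp only [Finset.mem_union, Finset.mem_filter, Finset.mem_image]
  constructor
  · rintro ((⟨h1, h2⟩ | h) | ⟨j, ⟨hj1, hj2⟩, hj3⟩)
    · exact Or.inl ⟨h1, h2⟩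
    · refine Or.inr (Or.inl ?_)
      split_ifs at h with hp0
      · simp at h
      · simp at h; exact ⟨hp0, h⟩
    · refine Or.inr (Or.inr ?_)
      constructor
      · omega
      · have : i - 1 = j := by omega
        rw [this]; exact hj1
  · rintro (⟨h1, h2⟩ | ⟨h1, h2⟩ | ⟨h1, h2⟩)
    · exact Or.inl (Or.inl ⟨h1, h2⟩)
    · refine Or.inl (Or.inr ?_)
      split_ifs with hp0
      · omega
      · simp [h2]
    · exact Or.inr ⟨i - 1, ⟨h2, by omega⟩, by omega⟩

lemma core {n p : ℕ} {v : List ℕ} (hv : v.Perm (List.range' 2 n)) (hp : p ≤ n) :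
    IsPermWord n (v.map (· - 1)) ∧ IsPermWord (n+1) (v.take p ++ 1 :: v.drop p) ∧
    ligne (v.map (· - 1)) = ligne v ∧
    mc (v.take p ++ 1 :: v.drop p) = Fp (ligne v) p :: mc (v.map (· - 1)) ∧
    ligne (v.take p ++ 1 :: v.drop p) = gS (ligne v) p := by
  set u := v.map (· - 1) with hu
  set w := v.take p ++ 1 :: v.drop p with hwdef
  set L := ligne v with hL
  have hlenv : v.length = n := by
    have := hv.length_eq; simpa using this
  have hv2 : ∀ x ∈ v, 2 ≤ x := by
    intro x hx
    have := hv.mem_iff.mp hx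
    rw [List.mem_range'] at this
    omega
  have hv1 : ∀ x ∈ v, 1 ≤ x := fun x hx => le_trans one_le_two (hv2 x hx)
  -- permutation facts
  have hu_perm : IsPermWord n u := by
    unfold IsPermWord
    have hmap : (List.range' 2 n).map (· - 1) = List.range' 1 n := by
      have h1 : List.range' 2 n = (List.range' 1 n).map (fun x => 1 + x) := by
        rw [List.map_add_range']
      rw [h1, List.map_map]
      have : ((· - 1) ∘ fun x => 1 + x) = id := by
        funext x; simp
      rw [this, List.map_id]
    rw [hu, ← hmap]
    exact hv.map _
  have hw_perm : IsPermWord (n+1) w := by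
    unfold IsPermWord
    have h1 : w.Perm (1 :: v) := by
      rw [hwdef]
      have := List.perm_middle (a := 1) (l₁ := v.take p) (l₂ := v.drop p)
      rw [List.take_append_drop] at this
      exact this
    have h2 : List.range' 1 (n+1) = 1 :: List.range' 2 n := by
      rw [List.range'_succ]
    rw [h2]
    exact h1.trans ((List.perm_cons 1).mpr hv)
  have hlu : ligne u = ligne v := ligne_map_pred hv1
  -- getD facts
  have htake_len : (v.take p).length = p := by
    rw [List.length_take, hlenv]; omega
  have hwlen : w.length = n + 1 := by
    rw [hwdef]
    simp [htake_len, List.length_drop, hlenv]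
    omega
  have hWlt : ∀ i, i < p → w.getD i 0 = v.getD i 0 := by
    intro i hi
    rw [hwdef, List.getD_append _ _ _ _ (by rw [htake_len]; exact hi)]
    have hiv : i < v.length := by omega
    rw [List.getD_eq_getElem _ _ (by rw [htake_len]; exact hi), List.getD_eq_getElem _ _ hiv]
    exact List.getElem_take
  have hWp : w.getD p 0 = 1 := by
    rw [hwdef, List.getD_append_right _ _ _ _ (le_of_eq htake_len), htake_len]
    simp
  have hWgt : ∀ i, p < i → w.getD i 0 = v.getD (i-1) 0 := by
    intro i hi
    rw [hwdef, List.getD_append_right _ _ _ _ (by rw [htake_len]; omega), htake_len]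
    have h1 : i - p = (i - p - 1) + 1 := by omega
    rw [h1, List.getD_cons_succ]
    by_cases hiv : i - 1 < v.length
    · rw [List.getD_eq_getElem _ _ (by rw [List.length_drop]; omega),
        List.getD_eq_getElem _ _ hiv]
      rw [List.getElem_drop]
      congr 1
      omega
    · rw [List.getD_eq_default _ _ (by rw [List.length_drop]; omega),
        List.getD_eq_default _ _ (by omega)]
  have hVmem : ∀ i, i < n → 2 ≤ v.getD i 0 := by
    intro i hi
    exact hv2 _ (getD_mem (by omega))
  have hLc : ∀ i, i ∈ L ↔ (1 ≤ i ∧ i ≤ n - 1) ∧ v.getD (i-1) 0 > v.getD i 0 := by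
    intro i; rw [hL, mem_ligne, hlenv]
  -- ligne w
  have hlw : ligne w = gS L p := by
    ext i
    rw [mem_ligne, mem_gS, hwlen]
    simp only [Nat.add_sub_cancel]
    rcases Nat.lt_trichotomy i p with hc | hc | hc
    · -- i < p
      rw [hWlt _ (by omega), hWlt _ hc]
      constructor
      · rintro ⟨⟨h1, h2⟩, h3⟩
        exact Or.inl ⟨(hLc i).mpr ⟨⟨h1, by omega⟩, h3⟩, hc⟩
      · rintro (⟨h1, h2⟩ | ⟨h1, h2⟩ | ⟨h1, h2⟩)
        · rcases (hLc i).mp h1 with ⟨⟨g1, g2⟩, g3⟩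
          exact ⟨⟨g1, by omega⟩, g3⟩
        · omega
        · omega
    · -- i = p
      subst hc
      constructor
      · rintro ⟨⟨h1, h2⟩, _⟩
        exact Or.inr (Or.inl ⟨by omega, rfl⟩)
      · rintro (⟨h1, h2⟩ | ⟨h1, h2⟩ | ⟨h1, h2⟩)
        · omega
        · refine ⟨⟨by omega, by omega⟩, ?_⟩
          rw [hWp, hWlt _ (by omega)]
          have := hVmem (i-1) (by omega)
          omega
        · omega
    · -- i > p
      rcases Nat.lt_or_ge i (p+2) with hc2 | hc2
      · -- i = p + 1
        have hip : i = p + 1 := by omega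
        subst hip
        constructor
        · rintro ⟨⟨h1, h2⟩, h3⟩
          simp only [Nat.add_sub_cancel] at h3
          rw [hWp, hWgt (p+1) (by omega)] at h3
          simp only [Nat.add_sub_cancel] at h3
          have := hVmem p (by omega)
          omega
        · rintro (⟨h1, h2⟩ | ⟨h1, h2⟩ | ⟨h1, h2⟩)
          · omega
          · omega
          · omega
      · -- i ≥ p + 2
        rw [hWgt _ (by omega), hWgt _ (by omega)]
        constructor
        · rintro ⟨⟨h1, h2⟩, h3⟩
          exact Or.inr (Or.inr ⟨hc2, (hLc (i-1)).mpr ⟨⟨by omega, by omega⟩, h3⟩⟩)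
        · rintro (⟨h1, h2⟩ | ⟨h1, h2⟩ | ⟨h1, h2⟩)
          · rcases (hLc i).mp h1 with ⟨⟨g1, g2⟩, _⟩
            omega
          · omega
          · rcases (hLc (i-1)).mp h2 with ⟨⟨g1, g2⟩, g3⟩
            exact ⟨⟨by omega, by omega⟩, g3⟩
  -- maj relation
  have hLsub : L ⊆ Finset.Icc 1 (n-1) := by
    intro x hx
    rcases (hLc x).mp hx with ⟨⟨g1, g2⟩, _⟩
    simp only [Finset.mem_Icc]
    omega
  have hmaj : maj w = maj v + Fp L p := by
    have hdisj2 : Disjoint (L.filter (· < p)) (if p = 0 then (∅ : Finset ℕ) else {p}) := by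
      rw [Finset.disjoint_left]
      intro x hx1 hx2
      simp only [Finset.mem_filter] at hx1
      split_ifs at hx2 with h0
      · simp at hx2
      · simp at hx2; omega
    have hdisj1 : Disjoint (L.filter (· < p) ∪ (if p = 0 then (∅ : Finset ℕ) else {p}))
        ((L.filter (fun j => p < j)).image (· + 1)) := by
      rw [Finset.disjoint_left]
      intro x hx1 hx2
      simp only [Finset.mem_image, Finset.mem_filter] at hx2
      obtain ⟨j, ⟨_, hj2⟩, hj3⟩ := hx2
      simp only [Finset.mem_union, Finset.mem_filter] at hx1
      rcases hx1 with ⟨_, h⟩ | h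
      · omega
      · split_ifs at h with h0
        · simp at h
        · simp at h; omega
    have hsum_ite : (∑ j ∈ (if p = 0 then (∅ : Finset ℕ) else {p}), j)
        = (if p = 0 then 0 else p) := by
      split_ifs <;> simp
    have hsum_img : (∑ j ∈ (L.filter (fun j => p < j)).image (· + 1), j)
        = (∑ j ∈ L.filter (fun j => p < j), j) + (L.filter (fun j => p < j)).card := by
      rw [Finset.sum_image (by intro x _ y _ hxy; simpa using hxy)]
      rw [Finset.sum_add_distrib]
      simp
    have hmajw : maj w = (∑ j ∈ L.filter (· < p), j) + (if p = 0 then 0 else p)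
        + ((∑ j ∈ L.filter (fun j => p < j), j) + (L.filter (fun j => p < j)).card) := by
      rw [maj, hlw, gS, Finset.sum_union hdisj1, Finset.sum_union hdisj2, hsum_ite, hsum_img]
    have hmajv : maj v = (∑ j ∈ L.filter (· < p), j) + (∑ j ∈ L.filter (fun j => p ≤ j), j) := by
      rw [maj, ← hL, ← Finset.sum_filter_add_sum_filter_not L (· < p)]
      congr 1
      apply Finset.sum_congr _ (fun _ _ => rfl)
      apply Finset.filter_congr
      intro x _
      exact not_lt
    by_cases hpL : p ∈ L
    · have hp1 : p ≠ 0 := by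
        have := hLsub hpL
        simp only [Finset.mem_Icc] at this
        omega
      have hfil : L.filter (fun j => p ≤ j) = insert p (L.filter (fun j => p < j)) := by
        ext x
        simp only [Finset.mem_insert, Finset.mem_filter]
        constructor
        · rintro ⟨hx1, hx2⟩
          rcases Nat.eq_or_lt_of_le hx2 with h | h
          · exact Or.inl h.symm
          · exact Or.inr ⟨hx1, h⟩
        · rintro (rfl | ⟨hx1, hx2⟩)
          · exact ⟨hpL, le_refl _⟩
          · exact ⟨hx1, by omega⟩
      have hsum2 : (∑ j ∈ L.filter (fun j => p ≤ j), j)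
          = p + (∑ j ∈ L.filter (fun j => p < j), j) := by
        rw [hfil, Finset.sum_insert (by simp)]
      rw [hmajw, hmajv, hsum2, Fp, if_pos hpL, if_neg hp1]
      omega
    · have hfil : L.filter (fun j => p ≤ j) = L.filter (fun j => p < j) := by
        apply Finset.filter_congr
        intro x hx
        constructor
        · intro h
          rcases Nat.eq_or_lt_of_le h with h' | h'
          · exact absurd (h' ▸ hx) hpL
          · exact h'
        · omega
      rw [hmajw, hmajv, hfil, Fp, if_neg hpL]
      split_ifs with h0
      · subst h0; omega
      · omega
  -- mc relation
  have hw1 : ∀ x ∈ w, 1 ≤ x := by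
    intro x hx
    have := hw_perm.mem_iff.mp hx
    rw [List.mem_range'] at this
    omega
  have hfilter_w : ∀ q : ℕ, 2 ≤ q →
      w.filter (fun x => decide (q ≤ x)) = v.filter (fun x => decide (q ≤ x)) := by
    intro q hq
    rw [hwdef, List.filter_append, List.filter_cons_of_neg (by simp; omega),
      ← List.filter_append, List.take_append_drop]
  have hvself : v.filter (fun x => decide (2 ≤ x)) = v := by
    rw [List.filter_eq_self]
    intro x hx
    simpa using hv2 x hx
  have hwself : w.filter (fun x => decide (1 ≤ x)) = w := by
    rw [List.filter_eq_self]
    intro x hx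
    simpa using hw1 x hx
  have hfilter_u : ∀ j : ℕ, u.filter (fun x => decide (j+1 ≤ x))
      = (v.filter (fun x => decide (j+2 ≤ x))).map (· - 1) := by
    intro j
    rw [hu, List.filter_map]
    congr 1
    apply List.filter_congr
    intro x hx
    have := hv2 x hx
    simp only [Function.comp]
    rw [decide_eq_decide]
    omega
  have hmaju : ∀ j : ℕ, maj (u.filter (fun x => decide (j+1 ≤ x)))
      = maj (v.filter (fun x => decide (j+2 ≤ x))) := by
    intro j
    rw [hfilter_u j]
    apply maj_map_pred
    intro x hx
    rw [List.mem_filter] at hx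
    have : j + 2 ≤ x := by simpa using hx.2
    omega
  have hulen : u.length = n := by rw [hu, List.length_map, hlenv]
  have hmc : mc w = Fp L p :: mc u := by
    unfold mc
    rw [hwlen, hulen, List.range_succ_eq_map, List.map_cons, List.map_map]
    congr 1
    · show maj (w.filter fun x => decide (0+1 ≤ x)) - maj (w.filter fun x => decide (0+2 ≤ x)) = Fp L p
      norm_num
      rw [hwself, hfilter_w 2 (le_refl 2), hvself, hmaj]
      omega
    · apply List.map_congr_left
      intro i _
      show maj (w.filter fun x => decide (i+1+1 ≤ x)) - maj (w.filter fun x => decide (i+1+2 ≤ x))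
        = maj (u.filter fun x => decide (i+1 ≤ x)) - maj (u.filter fun x => decide (i+2 ≤ x))
      rw [hmaju i, hmaju (i+1)]
      rw [hfilter_w (i+2) (by omega), hfilter_w (i+3) (by omega)]
  exact ⟨hu_perm, hw_perm, hlu, hmc, hlw⟩

lemma synth {n : ℕ} {u : List ℕ} (hu : IsPermWord n u) {p : ℕ} (hp : p ≤ n) :
    ∃ w, IsPermWord (n+1) w ∧ mc w = Fp (ligne u) p :: mc u ∧ ligne w = gS (ligne u) p := by
  set v := u.map (· + 1) with hvdef
  have hv : v.Perm (List.range' 2 n) := by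
    have h1 : (List.range' 1 n).map (· + 1) = List.range' 2 n := by
      have := List.map_add_range' (a := 1) 1 n 1
      rw [← this]
      apply List.map_congr_left
      intro x _
      omega
    rw [← h1]
    exact hu.map _
  have huv : v.map (· - 1) = u := by
    rw [hvdef, List.map_map]
    have : ((· - 1) ∘ (· + 1)) = (id : ℕ → ℕ) := by funext x; simp
    rw [this, List.map_id]
  obtain ⟨h1, h2, h3, h4, h5⟩ := core hv hp
  rw [huv] at h4
  rw [huv] at h3
  exact ⟨v.take p ++ 1 :: v.drop p, h2, by rw [h4, h3], by rw [h5, h3]⟩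

lemma analy {n : ℕ} {w : List ℕ} (hw : IsPermWord (n+1) w) :
    ∃ u p, IsPermWord n u ∧ p ≤ n ∧ mc w = Fp (ligne u) p :: mc u ∧ ligne w = gS (ligne u) p := by
  have h1w : (1 : ℕ) ∈ w := by
    rw [hw.mem_iff, List.mem_range']
    exact ⟨0, by omega, by omega⟩
  set p := w.idxOf 1 with hpdef
  have hplen : p < w.length := List.idxOf_lt_length_iff.mpr h1w
  have hwlen : w.length = n + 1 := by
    have := hw.length_eq; simpa using this
  have hdecomp : w = w.take p ++ 1 :: w.drop (p+1) := by
    conv_lhs => rw [← List.take_append_drop p w]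
    congr 1
    rw [List.drop_eq_getElem_cons hplen, List.getElem_idxOf hplen]
  set v := w.take p ++ w.drop (p+1) with hvdef
  have htklen : (w.take p).length = p := by
    rw [List.length_take]; omega
  have hvtake : v.take p = w.take p := List.take_left' htklen
  have hvdrop : v.drop p = w.drop (p+1) := List.drop_left' htklen
  have hwv : w = v.take p ++ 1 :: v.drop p := by
    rw [hvtake, hvdrop]; exact hdecomp
  have hv : v.Perm (List.range' 2 n) := by
    have h1 : w.Perm (1 :: v) := by
      conv_lhs => rw [hwv]
      exact List.perm_middle.trans (by rw [List.take_append_drop])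
    have h2 : List.range' 1 (n+1) = 1 :: List.range' 2 n := List.range'_succ
    have hw' : w.Perm (List.range' 1 (n+1)) := hw
    have h3 : (1 :: v).Perm (1 :: List.range' 2 n) := h1.symm.trans (h2 ▸ hw')
    exact (List.perm_cons 1).mp h3
  have hp : p ≤ n := by omega
  obtain ⟨h1, h2, h3, h4, h5⟩ := core hv hp
  refine ⟨v.map (· - 1), p, h1, hp, ?_, ?_⟩
  · rw [hwv, h4, h3]
  · rw [hwv, h5, h3]

lemma ligne_subset (w : List ℕ) : ligne w ⊆ Finset.Icc 1 (w.length - 1) :=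
  Finset.filter_subset _ _

lemma mc_length (w : List ℕ) : (mc w).length = w.length := by simp [mc]

lemma ligne_unique : ∀ d w w', IsPermWord d.length w → mc w = d →
    IsPermWord d.length w' → mc w' = d → ligne w = ligne w' := by
  intro d
  induction d with
  | nil =>
    intro w w' hw hmcw hw' hmcw'
    have h1 : w = [] := List.Perm.eq_nil (by simpa [IsPermWord] using hw)
    have h2 : w' = [] := List.Perm.eq_nil (by simpa [IsPermWord] using hw')
    rw [h1, h2]
  | cons k d' ih =>
    intro w w' hw hmcw hw' hmcw'
    obtain ⟨u, p, hu, hp, hmc, hlw⟩ := analy (n := d'.length) hw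
    obtain ⟨u', p', hu', hp', hmc', hlw'⟩ := analy (n := d'.length) hw'
    rw [hmcw] at hmc
    rw [hmcw'] at hmc'
    injection hmc with e1 e2
    injection hmc' with e1' e2'
    have hligeq : ligne u = ligne u' := ih u u' hu e2.symm hu' e2'.symm
    have hpp : p = p' := by
      by_contra hne
      rcases Nat.lt_or_ge p p' with h | h
      · exact Fp_ne h (by rw [← e1, hligeq, ← e1'])
      · have hlt : p' < p := by omega
        refine Fp_ne (L := ligne u) hlt ?_
        rw [hligeq, ← e1', ← hligeq, ← e1]
    rw [hlw, hlw', hligeq, hpp]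

lemma main : ∀ c d₁ d₂ : List ℕ, Subdiagonal (c ++ d₁) → Subdiagonal (c ++ d₂) →
    (∃ u₁ u₂, IsPermWord d₁.length u₁ ∧ mc u₁ = d₁ ∧ IsPermWord d₂.length u₂ ∧ mc u₂ = d₂ ∧
      ligne u₁ = ligne u₂) →
    ∃ w₁ w₂, IsPermWord (c++d₁).length w₁ ∧ mc w₁ = c++d₁ ∧
      IsPermWord (c++d₂).length w₂ ∧ mc w₂ = c++d₂ ∧ ligne w₁ = ligne w₂ := by
  intro c
  induction c with
  | nil =>
    intro d₁ d₂ _ _ ⟨u₁, u₂, h1, h2, h3, h4, h5⟩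
    exact ⟨u₁, u₂, by simpa using h1, by simpa using h2, by simpa using h3, by simpa using h4, h5⟩
  | cons k c' ih =>
    intro d₁ d₂ hs1 hs2 hex
    have hs1' : Subdiagonal (c' ++ d₁) := subdiagonal_tail (by simpa using hs1)
    have hs2' : Subdiagonal (c' ++ d₂) := subdiagonal_tail (by simpa using hs2)
    obtain ⟨w₁, w₂, hw₁, hmc₁, hw₂, hmc₂, hlig⟩ := ih d₁ d₂ hs1' hs2' hex
    have hk₁ : k ≤ (c' ++ d₁).length := by
      have h0 := hs1 0 (by simp)
      rw [List.cons_append] at h0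
      simp only [List.getD_cons_zero, List.length_cons] at h0
      omega
    have hk₂ : k ≤ (c' ++ d₂).length := by
      have h0 := hs2 0 (by simp)
      rw [List.cons_append] at h0
      simp only [List.getD_cons_zero, List.length_cons] at h0
      omega
    have hL₁ : ligne w₁ ⊆ Finset.Icc 1 ((c' ++ d₁).length - 1) := by
      have := ligne_subset w₁
      rwa [hw₁.length_eq, List.length_range'] at this
    obtain ⟨p₁, hp₁, hfp₁⟩ := Fp_surj hL₁ hk₁
    have hL₂ : ligne w₂ ⊆ Finset.Icc 1 ((c' ++ d₂).length - 1) := by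
      have := ligne_subset w₂
      rwa [hw₂.length_eq, List.length_range'] at this
    obtain ⟨p₂, hp₂, hfp₂⟩ := Fp_surj hL₂ hk₂
    have hpp : p₁ = p₂ := by
      by_contra hne
      rcases Nat.lt_or_ge p₁ p₂ with h | h
      · exact Fp_ne (L := ligne w₁) h (by rw [hfp₁, hlig, hfp₂])
      · have : p₂ < p₁ := by omega
        exact Fp_ne (L := ligne w₁) this (by rw [hfp₁, hlig, hfp₂])
    obtain ⟨W₁, hW₁, hWmc₁, hWlig₁⟩ := synth hw₁ hp₁
    obtain ⟨W₂, hW₂, hWmc₂, hWlig₂⟩ := synth hw₂ hp₂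
    refine ⟨W₁, W₂, ?_, ?_, ?_, ?_, ?_⟩
    · simpa using hW₁
    · rw [hWmc₁, hfp₁, hmc₁]; rfl
    · simpa using hW₂
    · rw [hWmc₂, hfp₂, hmc₂]; rfl
    · rw [hWlig₁, hWlig₂, hlig, hpp]

lemma El_eq {d u : List ℕ} (h1 : IsPermWord d.length u) (h2 : mc u = d) : El d = ligne u := by
  unfold El
  rw [dif_pos ⟨u, h1, h2⟩]
  set h := (⟨u, h1, h2⟩ : ∃ w, IsPermWord d.length w ∧ mc w = d)
  obtain ⟨hc1, hc2⟩ := h.choose_spec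
  exact ligne_unique d _ u hc1 hc2 h1 h2

theorem stmt15 (a b c : List ℕ)
    (ha : Subdiagonal a) (hb : Subdiagonal b)
    (hca : Subdiagonal (c ++ a)) (hcb : Subdiagonal (c ++ b))
    (h : El a = El b) : El (c ++ a) = El (c ++ b) := by
  have hnil : IsPermWord ([] : List ℕ).length [] ∧ mc ([] : List ℕ) = [] := by
    constructor
    · simp [IsPermWord]
    · simp [mc]
  have hexa : ∃ u, IsPermWord a.length u ∧ mc u = a := by
    obtain ⟨w₁, _, hw₁, hmc₁, _⟩ := main a [] [] (by simpa using ha) (by simpa using ha)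
      ⟨[], [], hnil.1, hnil.2, hnil.1, hnil.2, rfl⟩
    exact ⟨w₁, by simpa using hw₁, by simpa using hmc₁⟩
  have hexb : ∃ u, IsPermWord b.length u ∧ mc u = b := by
    obtain ⟨w₁, _, hw₁, hmc₁, _⟩ := main b [] [] (by simpa using hb) (by simpa using hb)
      ⟨[], [], hnil.1, hnil.2, hnil.1, hnil.2, rfl⟩
    exact ⟨w₁, by simpa using hw₁, by simpa using hmc₁⟩
  obtain ⟨ua, hua1, hua2⟩ := hexa
  obtain ⟨ub, hub1, hub2⟩ := hexb
  have hlig : ligne ua = ligne ub := by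
    rw [← El_eq hua1 hua2, ← El_eq hub1 hub2, h]
  obtain ⟨W₁, W₂, hW₁, hWmc₁, hW₂, hWmc₂, hWlig⟩ :=
    main c a b hca hcb ⟨ua, ub, hua1, hua2, hub1, hub2, hlig⟩
  rw [El_eq hW₁ hWmc₁, El_eq hW₂ hWmc₂, hWlig]
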